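/- For all a, b ∈ ℂ not both zero, the structure-constant matrix of d_5^{a,b} over the rational function field has generic rank 4, and hence N(d_5^{a,b}) = 6 − 4 = 2. -/

import Mathlib

set_option maxHeartbeats 4000000
set_option synthInstance.maxHeartbeats 1000000
set_option linter.unreachableTactic false
set_option linter.unusedTactic false


open MvPolynomial

/-- Entry polynomials (listed direction) of the structure-constant matrix of
`d_5^{a,b}` over `ℂ[x_0,x_1,x_2,x_3,y_1,v]` (variables indexed by `Fin 6`).
Basis: `X_0 ↦ 0, …, X_3 ↦ 3, Y_1 ↦ 4, V ↦ 5`. -/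
noncomputable def strABP (a b : ℂ) (i j : ℕ) : MvPolynomial (Fin 6) ℂ :=
  (if i = 0 ∧ (j = 1 ∨ j = 2) then X ((Fin.ofNat 6 j : Fin 6) + 1) else 0) +
  (if i = 1 ∧ j = 2 then X 4 else 0) +
  (if i = 5 ∧ j = 0 then C a * X 0 else 0) +
  (if i = 5 ∧ j = 1 then C b * X 1 else 0) +
  (if i = 5 ∧ j = 2 then C (a + b) * X 2 else 0) +
  (if i = 5 ∧ j = 3 then C (2 * a + b) * X 3 else 0) +
  (if i = 5 ∧ j = 4 then C (a + 2 * b) * X 4 else 0)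

/-- The antisymmetric 6×6 structure-constant matrix of `d_5^{a,b}` over the
rational function field `ℂ(x_0,x_1,x_2,x_3,y_1,v)`. -/
noncomputable def AAB (a b : ℂ) :
    Matrix (Fin 6) (Fin 6) (FractionRing (MvPolynomial (Fin 6) ℂ)) :=
  fun i j =>
    algebraMap (MvPolynomial (Fin 6) ℂ) _ (strABP a b i.1 j.1 - strABP a b j.1 i.1)


noncomputable def al : MvPolynomial (Fin 6) ℂ →+* FractionRing (MvPolynomial (Fin 6) ℂ) :=
  algebraMap _ _

noncomputable def xx (i : Fin 6) : FractionRing (MvPolynomial (Fin 6) ℂ) := al (X i)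
noncomputable def cc (z : ℂ) : FractionRing (MvPolynomial (Fin 6) ℂ) := al (C z)


lemma fv0 : ((0:Fin 6):ℕ) = 0 := rfl
lemma fv1 : ((1:Fin 6):ℕ) = 1 := rfl
lemma fv2 : ((2:Fin 6):ℕ) = 2 := rfl
lemma fv3 : ((3:Fin 6):ℕ) = 3 := rfl
lemma fv4 : ((4:Fin 6):ℕ) = 4 := rfl
lemma fv5 : ((5:Fin 6):ℕ) = 5 := rfl
lemma s62 : (2:Fin 6) = (1:Fin 5).succ := rfl
lemma s63 : (3:Fin 6) = (2:Fin 5).succ := rfl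
lemma s64 : (4:Fin 6) = (3:Fin 5).succ := rfl
lemma s65 : (5:Fin 6) = (4:Fin 5).succ := rfl
lemma s52 : (2:Fin 5) = (1:Fin 4).succ := rfl
lemma s53 : (3:Fin 5) = (2:Fin 4).succ := rfl
lemma s54 : (4:Fin 5) = (3:Fin 4).succ := rfl
lemma s42 : (2:Fin 4) = (1:Fin 3).succ := rfl
lemma s43 : (3:Fin 4) = (2:Fin 3).succ := rfl
lemma s32 : (2:Fin 3) = (1:Fin 2).succ := rfl
lemma r62 : (1:Fin 5).succ = (2:Fin 6) := rfl
lemma r63 : (2:Fin 5).succ = (3:Fin 6) := rfl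
lemma r64 : (3:Fin 5).succ = (4:Fin 6) := rfl
lemma r65 : (4:Fin 5).succ = (5:Fin 6) := rfl
lemma r52 : (1:Fin 4).succ = (2:Fin 5) := rfl
lemma r53 : (2:Fin 4).succ = (3:Fin 5) := rfl
lemma r54 : (3:Fin 4).succ = (4:Fin 5) := rfl
lemma r42 : (1:Fin 3).succ = (2:Fin 4) := rfl
lemma r43 : (2:Fin 3).succ = (3:Fin 4) := rfl
lemma r32 : (1:Fin 2).succ = (2:Fin 3) := rfl
lemma s61 : (1:Fin 6) = (0:Fin 5).succ := rfl
lemma s51 : (1:Fin 5) = (0:Fin 4).succ := rfl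
lemma s41 : (1:Fin 4) = (0:Fin 3).succ := rfl
lemma s31 : (1:Fin 3) = (0:Fin 2).succ := rfl
lemma s21 : (1:Fin 2) = (0:Fin 1).succ := rfl
lemma r61 : (0:Fin 5).succ = (1:Fin 6) := rfl
lemma r51 : (0:Fin 4).succ = (1:Fin 5) := rfl
lemma r41 : (0:Fin 3).succ = (1:Fin 4) := rfl
lemma r31 : (0:Fin 2).succ = (1:Fin 3) := rfl
lemma r21 : (0:Fin 1).succ = (1:Fin 2) := rfl

theorem det_fin_four' {R : Type*} [CommRing R] (A : Matrix (Fin 4) (Fin 4) R) :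
    Matrix.det A =
      A 0 0 * A 1 1 * A 2 2 * A 3 3 - A 0 0 * A 1 1 * A 2 3 * A 3 2 -
      A 0 0 * A 1 2 * A 2 1 * A 3 3 + A 0 0 * A 1 2 * A 2 3 * A 3 1 +
      A 0 0 * A 1 3 * A 2 1 * A 3 2 - A 0 0 * A 1 3 * A 2 2 * A 3 1 -
      A 0 1 * A 1 0 * A 2 2 * A 3 3 + A 0 1 * A 1 0 * A 2 3 * A 3 2 +
      A 0 1 * A 1 2 * A 2 0 * A 3 3 - A 0 1 * A 1 2 * A 2 3 * A 3 0 -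
      A 0 1 * A 1 3 * A 2 0 * A 3 2 + A 0 1 * A 1 3 * A 2 2 * A 3 0 +
      A 0 2 * A 1 0 * A 2 1 * A 3 3 - A 0 2 * A 1 0 * A 2 3 * A 3 1 -
      A 0 2 * A 1 1 * A 2 0 * A 3 3 + A 0 2 * A 1 1 * A 2 3 * A 3 0 +
      A 0 2 * A 1 3 * A 2 0 * A 3 1 - A 0 2 * A 1 3 * A 2 1 * A 3 0 -
      A 0 3 * A 1 0 * A 2 1 * A 3 2 + A 0 3 * A 1 0 * A 2 2 * A 3 1 +
      A 0 3 * A 1 1 * A 2 0 * A 3 2 - A 0 3 * A 1 1 * A 2 2 * A 3 0 -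
      A 0 3 * A 1 2 * A 2 0 * A 3 1 + A 0 3 * A 1 2 * A 2 1 * A 3 0 := by
  rw [Matrix.det_succ_row_zero]
  simp only [Fin.sum_univ_four, s41, s42, s43, s31, s32, s21,
    Fin.zero_succAbove, Fin.succ_succAbove_zero, Fin.succ_succAbove_succ,
    Matrix.submatrix_apply, Matrix.det_fin_three, Fin.val_zero, Fin.val_succ,
    pow_succ, pow_zero]
  simp only [r41, r42, r43, r31, r32, r21]
  ring

lemma AAB_def (a b : ℂ) (i j : Fin 6) :
    AAB a b i j = al (strABP a b i.1 j.1 - strABP a b j.1 i.1) := rfl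

/-- explicit form of the matrix -/
noncomputable def Mab (a b : ℂ) :
    Matrix (Fin 6) (Fin 6) (FractionRing (MvPolynomial (Fin 6) ℂ)) := Matrix.of ![
 ![0, xx 2, xx 3, 0, 0, -(cc a * xx 0)],
 ![-xx 2, 0, xx 4, 0, 0, -(cc b * xx 1)],
 ![-xx 3, -xx 4, 0, 0, 0, -((cc a + cc b) * xx 2)],
 ![0, 0, 0, 0, 0, -((2 * cc a + cc b) * xx 3)],
 ![0, 0, 0, 0, 0, -((cc a + 2 * cc b) * xx 4)],
 ![cc a * xx 0, cc b * xx 1, (cc a + cc b) * xx 2,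
   (2 * cc a + cc b) * xx 3, (cc a + 2 * cc b) * xx 4, 0]]

lemma AAB_eq_Mab (a b : ℂ) : AAB a b = Mab a b := by
  ext i j
  fin_cases i <;> fin_cases j <;>
    simp [AAB_def, strABP, Mab, xx, cc, fv0, fv1, fv2, fv3, fv4, fv5,
      s62, s63, s64, s65, s52, s53, s54, s42, s43, s32, Matrix.cons_val_succ,
      map_sub, map_add, map_mul, C_add, C_mul, map_ofNat] <;>
    (try simp only [r62, r63, r64, r65, r52, r53, r54, r42, r43, r32]) <;>
    ring_nf <;>
    rfl

noncomputable def Pf (a b : ℂ) : MvPolynomial (Fin 6) ℂ :=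
  C a * X 0 * X 4 - C b * X 1 * X 3 + C (a + b) * (X 2 * X 2)

noncomputable def pf (a b : ℂ) : FractionRing (MvPolynomial (Fin 6) ℂ) := al (Pf a b)

lemma pf_eq (a b : ℂ) :
    pf a b = cc a * xx 0 * xx 4 - cc b * xx 1 * xx 3 + (cc a + cc b) * (xx 2 * xx 2) := by
  simp [pf, Pf, cc, xx, map_sub, map_add, map_mul, C_add]

lemma Pf_ne_zero (a b : ℂ) (hab : ¬(a = 0 ∧ b = 0)) : Pf a b ≠ 0 := by
  have hab' : a ≠ 0 ∨ b ≠ 0 := by tauto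
  rcases hab' with ha | hb
  · intro h
    have h2 := congrArg (eval ![1, 0, 0, 0, 1, 0]) h
    apply ha
    simpa [Pf, s62, s63, s64, s65, s52, s53, s54, s42, s43, s32, Matrix.cons_val_succ] using h2
  · intro h
    have h2 := congrArg (eval ![0, 1, 0, 1, 0, 0]) h
    apply hb
    simpa [Pf, s62, s63, s64, s65, s52, s53, s54, s42, s43, s32, Matrix.cons_val_succ] using h2

lemma pf_ne_zero (a b : ℂ) (hab : ¬(a = 0 ∧ b = 0)) : pf a b ≠ 0 := by
  intro h
  exact Pf_ne_zero a b hab (IsFractionRing.injective (MvPolynomial (Fin 6) ℂ)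
    (FractionRing (MvPolynomial (Fin 6) ℂ)) (by rw [map_zero]; exact h))

noncomputable def Bab (a b : ℂ) : Matrix (Fin 6) (Fin 4) (FractionRing (MvPolynomial (Fin 6) ℂ)) :=
  Matrix.of ![
    ![1, 0, 0, 0],
    ![0, 1, 0, 0],
    ![0, 0, 1, 0],
    ![(2 * cc a + cc b) * xx 3 * xx 4 / pf a b, -((2 * cc a + cc b) * xx 3 * xx 3) / pf a b,
      (2 * cc a + cc b) * xx 3 * xx 2 / pf a b, 0],
    ![(cc a + 2 * cc b) * xx 4 * xx 4 / pf a b, -((cc a + 2 * cc b) * xx 4 * xx 3) / pf a b,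
      (cc a + 2 * cc b) * xx 4 * xx 2 / pf a b, 0],
    ![0, 0, 0, 1]]

lemma factor (a b : ℂ) (hab : ¬(a = 0 ∧ b = 0)) :
    Mab a b = Bab a b * (Mab a b).submatrix ![0, 1, 2, 5] id := by
  have hpf := pf_ne_zero a b hab
  ext i j
  fin_cases i <;> fin_cases j <;>
  · rw [Matrix.mul_apply]
    simp [Matrix.mul_apply, Fin.sum_univ_four, Bab, Mab, Matrix.submatrix_apply,
      fv0, fv1, fv2, fv3, fv4, fv5,
      s62, s63, s64, s65, s52, s53, s54, s42, s43, s32, Matrix.cons_val_succ]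
    try simp only [r62, r63, r64, r65, r52, r53, r54, r42, r43, r32]
    try field_simp
    try rw [pf_eq]
    try ring

lemma det_S (a b : ℂ) :
    ((Mab a b).submatrix ![0, 1, 2, 5] ![0, 1, 2, 5]).det = pf a b * pf a b := by
  rw [det_fin_four']
  simp [Mab, Matrix.submatrix_apply, fv0, fv1, fv2, fv3, fv4, fv5,
    s62, s63, s64, s65, s52, s53, s54, s42, s43, s32, Matrix.cons_val_succ]
  try simp only [r62, r63, r64, r65, r52, r53, r54, r42, r43, r32]
  rw [pf_eq]
  ring

lemma rank_upper (a b : ℂ) (hab : ¬(a = 0 ∧ b = 0)) : (Mab a b).rank ≤ 4 := by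
  rw [factor a b hab]
  exact le_trans (Matrix.rank_mul_le_right _ _)
    (le_trans (Matrix.rank_le_card_height _) (by simp))

lemma rank_lower (a b : ℂ) (hab : ¬(a = 0 ∧ b = 0)) : 4 ≤ (Mab a b).rank := by
  have hpf := pf_ne_zero a b hab
  have hu : IsUnit ((Mab a b).submatrix ![0, 1, 2, 5] ![0, 1, 2, 5]) :=
    (Matrix.isUnit_iff_isUnit_det _).2 (isUnit_iff_ne_zero.2
      (by rw [det_S]; exact mul_ne_zero hpf hpf))
  have h2 : ((Mab a b).submatrix ![0, 1, 2, 5] ![0, 1, 2, 5]).rank = 4 := by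
    simpa using Matrix.rank_of_isUnit _ hu
  have hsub : (Mab a b).submatrix ![0, 1, 2, 5] ![0, 1, 2, 5] =
      ((1 : Matrix (Fin 6) (Fin 6) (FractionRing (MvPolynomial (Fin 6) ℂ))).submatrix
          ![0, 1, 2, 5] ⇑(Equiv.refl (Fin 6)) * Mab a b) *
        (1 : Matrix (Fin 6) (Fin 6) (FractionRing (MvPolynomial (Fin 6) ℂ))).submatrix
          (⇑(Equiv.refl (Fin 6))) ![0, 1, 2, 5] := by
    rw [Matrix.one_submatrix_mul, Matrix.mul_submatrix_one]
    ext i j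
    simp only [Matrix.submatrix_apply]
    fin_cases i <;> fin_cases j <;>
      simp [Matrix.submatrix_apply, s41, s42, s43, Matrix.cons_val_succ]
  have h1 : ((Mab a b).submatrix ![0, 1, 2, 5] ![0, 1, 2, 5]).rank ≤ (Mab a b).rank := by
    rw [hsub]
    exact le_trans (Matrix.rank_mul_le_left _ _) (Matrix.rank_mul_le_right _ _)
  omega

/-- For all `a, b ∈ ℂ` not both zero the structure-constant matrix of `d_5^{a,b}`
has generic rank 4, hence `N(d_5^{a,b}) = 6 − 4 = 2`. -/
theorem rank_d5ab (a b : ℂ) (hab : ¬(a = 0 ∧ b = 0)) :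
    (AAB a b).rank = 4 ∧ 6 - (AAB a b).rank = 2 := by
  have h : (AAB a b).rank = 4 := by
    rw [AAB_eq_Mab]
    exact le_antisymm (rank_upper a b hab) (rank_lower a b hab)
  exact ⟨h, by rw [h]⟩
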